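/- If {J, J₁'} and {J, J₂'} are useful sub-systems in Φ with Ψ₁' ⊆ Ψ₂', then S^{Ψ,Ψ₂'} is a KW-submodule of S^{Ψ,Ψ₁'}. -/

import Mathlib

open scoped Pointwise RealInnerProductSpace Classical

noncomputable section

variable {V : Type*} [NormedAddCommGroup V] [InnerProductSpace ℝ V]

/-- The reflection `τ_α` in the hyperplane orthogonal to `α` (the identity if `α = 0`):
`τ_α v = v - 2 (⟪α, v⟫ / ⟪α, α⟫) • α`. -/
def tau (α : V) : V ≃ₗ[ℝ] V :=
  if hα : α = 0 then LinearEquiv.refl ℝ V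
  else Module.reflection (f := (2 / ⟪α, α⟫) • (innerₛₗ ℝ α)) (x := α) (by
    have h : ⟪α, α⟫ ≠ 0 := inner_self_ne_zero.mpr hα
    simp only [LinearMap.smul_apply, innerₛₗ_apply_apply, smul_eq_mul]
    field_simp)

/-- The reflection group generated by the reflections `τ_α`, `α ∈ Φ`. -/
def WeylGroup (Φ : Set V) : Subgroup (V ≃ₗ[ℝ] V) :=
  Subgroup.closure (tau '' Φ)

variable (Φ : Set V)

/-- The reflection subgroup `W(S)` of `W(Φ)` generated by reflections in elements of `S`. -/
def WeylSub (S : Set V) : Subgroup ↥(WeylGroup Φ) :=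
  Subgroup.closure {w : ↥(WeylGroup Φ) | ∃ α ∈ S, (w : V ≃ₗ[ℝ] V) = tau α}

/-- `N(Ψ) = {w ∈ W | wΨ = Ψ}`, the setwise stabilizer of `Ψ` in the Weyl group. -/
def NSub (Ψ : Set V) : Subgroup ↥(WeylGroup Φ) :=
  MulAction.stabilizer ↥(WeylGroup Φ) Ψ

/-- `Φ` is a (not necessarily crystallographic) root system. -/
def IsRootSystem : Prop :=
  Φ.Finite ∧ (∀ α ∈ Φ, α ≠ 0) ∧ (∀ α ∈ Φ, -α ∈ Φ) ∧
    (∀ α ∈ Φ, ∀ c : ℝ, c • α ∈ Φ → c = 1 ∨ c = -1) ∧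
    ∀ α ∈ Φ, ∀ β ∈ Φ, tau α β ∈ Φ

/-- `Ψ` is a subsystem of `Φ`: a subset closed under its own reflections. -/
def IsSubsystem (Ψ : Set V) : Prop :=
  Ψ ⊆ Φ ∧ ∀ α ∈ Ψ, ∀ β ∈ Ψ, tau α β ∈ Ψ

/-- `Φp` is a positive system in `Φ`. -/
def IsPositiveSystem (Φp : Set V) : Prop :=
  Φp ⊆ Φ ∧ ∀ α ∈ Φ, (α ∈ Φp ↔ ¬ (-α ∈ Φp))

/-- `J` is a simple system for the (sub)system `Ψ`: a linearly independent subset such that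
every root of `Ψ` is a non-negative or non-positive combination of `J`. -/
def IsSimpleSystem (Ψ J : Set V) : Prop :=
  J ⊆ Ψ ∧ LinearIndependent ℝ ((↑) : J → V) ∧
    ∀ α ∈ Ψ, ∃ f : V →₀ ℝ, ↑f.support ⊆ J ∧
      ((∀ v, 0 ≤ f v) ∨ (∀ v, f v ≤ 0)) ∧ α = f.sum fun v c => c • v

/-- `Ψ^⊥`: the largest subsystem of `Φ` orthogonal to `Ψ`. -/
def perp (Ψ : Set V) : Set V := {α ∈ Φ | ∀ β ∈ Ψ, ⟪α, β⟫ = 0}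

/-- `{J, J'}` is a useful sub-system: `N(Ψ) ∩ W(Ψ') = 1` and `W(Ψ^⊥) ∩ W(Ψ'^⊥) = 1`. -/
def UsefulSubSystem (Ψ Ψ' : Set V) : Prop :=
  NSub Φ Ψ ⊓ WeylSub Φ Ψ' = ⊥ ∧ WeylSub Φ (perp Φ Ψ) ⊓ WeylSub Φ (perp Φ Ψ') = ⊥

variable (K : Type*) [Field K]

/-- The set of Δ*-tabloids: left cosets of `N(Ψ)` in `W`. -/
abbrev Tab (Ψ : Set V) := ↥(WeylGroup Φ) ⧸ NSub Φ Ψ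

/-- The permutation module `M^Ψ` with basis the Δ*-tabloids. -/
abbrev MPsi (Ψ : Set V) := Tab Φ Ψ →₀ K

/-- The action of `w ∈ W` on `M^Ψ`, permuting the tabloid basis. -/
def act {Ψ : Set V} (w : ↥(WeylGroup Φ)) (m : MPsi Φ K Ψ) : MPsi Φ K Ψ :=
  Finsupp.mapDomain (fun t => w • t) m

/-- The sign `s(w) = (-1)^{ℓ(w)} = det w`, viewed in the field `K`. -/
def sgn (w : ↥(WeylGroup Φ)) : K :=
  if LinearMap.det ((w : V ≃ₗ[ℝ] V) : V →ₗ[ℝ] V) = 1 then 1 else -1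

/-- `κ_{J'} = Σ_{σ ∈ W(Ψ')} s(σ) σ`, acting on `M^Ψ`. -/
def kappa (Ψ Ψ' : Set V) (m : MPsi Φ K Ψ) : MPsi Φ K Ψ :=
  ∑ᶠ σ ∈ (WeylSub Φ Ψ' : Set ↥(WeylGroup Φ)), sgn Φ K σ • act Φ K σ m

/-- The generalized Δ*-polytabloid `e_{J,J'} = κ_{J'} {J}`. -/
def polytabloid (Ψ Ψ' : Set V) : MPsi Φ K Ψ :=
  kappa Φ K Ψ Ψ' (Finsupp.single (QuotientGroup.mk 1) 1)

/-- A good sub-system: a useful sub-system such that whenever `dΨ ∩ Ψ' = ∅`, the tabloid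
`{dJ}` appears with non-zero coefficient in `e_{J,J'}`. -/
def GoodSubSystem (Ψ Ψ' : Set V) : Prop :=
  UsefulSubSystem Φ Ψ Ψ' ∧
    ∀ d : ↥(WeylGroup Φ), (d • Ψ) ∩ Ψ' = ∅ →
      polytabloid Φ K Ψ Ψ' (QuotientGroup.mk d) ≠ 0

/-- The submodule of the generalized Specht module: span of all `w·e_{J,J'}`. -/
def SpechtSub (Ψ Ψ' : Set V) : Submodule K (MPsi Φ K Ψ) :=
  Submodule.span K (Set.range fun w : ↥(WeylGroup Φ) => act Φ K w (polytabloid Φ K Ψ Ψ'))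

/-- The standard bilinear form on `M^Ψ` for which the tabloids are orthonormal. -/
def Bform (Ψ : Set V) : MPsi Φ K Ψ →ₗ[K] MPsi Φ K Ψ →ₗ[K] K :=
  Finsupp.lsum K fun t => LinearMap.toSpanSingleton K _ (Finsupp.lapply t)

/-- The orthogonal complement `S^{Ψ,Ψ'⊥}` of the Specht submodule in `M^Ψ`. -/
def SpechtPerp (Ψ Ψ' : Set V) : Submodule K (MPsi Φ K Ψ) :=
  ⨅ y ∈ SpechtSub Φ K Ψ Ψ', LinearMap.ker ((Bform Φ K Ψ).flip y)

/-- Explicit equiv `(G ⧸ K) × K ≃ G`, `(q, τ) ↦ q.out * τ`. -/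
noncomputable def cosetProdEquiv {G : Type*} [Group G] (K' : Subgroup G) :
    (G ⧸ K') × K' ≃ G where
  toFun p := p.1.out * p.2
  invFun g := (QuotientGroup.mk g, ⟨(QuotientGroup.mk g : G ⧸ K').out⁻¹ * g,
    QuotientGroup.eq.mp (QuotientGroup.out_eq' _)⟩)
  left_inv := by
    rintro ⟨q, τ⟩
    have h1 : (QuotientGroup.mk (q.out * ↑τ) : G ⧸ K') = q := by
      rw [QuotientGroup.mk_mul_of_mem _ τ.2, QuotientGroup.out_eq']
    refine Prod.ext h1 (Subtype.ext ?_)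
    simp only [h1, inv_mul_cancel_left]
  right_inv g := by simp [mul_inv_cancel_left]

lemma tau_tau (α : V) (v : V) : tau α (tau α v) = v := by
  unfold tau
  split_ifs with h
  · rfl
  · exact Module.involutive_reflection _ v

lemma det_tau_sq (α : V) :
    LinearMap.det ((tau α : V ≃ₗ[ℝ] V) : V →ₗ[ℝ] V) *
      LinearMap.det ((tau α : V ≃ₗ[ℝ] V) : V →ₗ[ℝ] V) = 1 := by
  rw [← LinearMap.det_comp]
  have : ((tau α : V ≃ₗ[ℝ] V) : V →ₗ[ℝ] V) ∘ₗ ((tau α : V ≃ₗ[ℝ] V) : V →ₗ[ℝ] V)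
      = LinearMap.id := by
    ext v; exact tau_tau α v
  rw [this, LinearMap.det_id]

lemma det_coe_mul (a b : V ≃ₗ[ℝ] V) :
    LinearMap.det (((a * b : V ≃ₗ[ℝ] V)) : V →ₗ[ℝ] V) =
      LinearMap.det ((a : V ≃ₗ[ℝ] V) : V →ₗ[ℝ] V) *
        LinearMap.det ((b : V ≃ₗ[ℝ] V) : V →ₗ[ℝ] V) := by
  rw [← LinearMap.det_comp]
  rfl

lemma det_pm (w : V ≃ₗ[ℝ] V) (hw : w ∈ WeylGroup Φ) :
    LinearMap.det ((w : V ≃ₗ[ℝ] V) : V →ₗ[ℝ] V) = 1 ∨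
      LinearMap.det ((w : V ≃ₗ[ℝ] V) : V →ₗ[ℝ] V) = -1 := by
  refine Subgroup.closure_induction (fun x hx => ?_) ?_ (fun x y _ _ hx hy => ?_)
    (fun x _ hx => ?_) hw
  · obtain ⟨α, -, rfl⟩ := hx
    exact mul_self_eq_one_iff.mp (det_tau_sq α)
  · left
    have : (((1 : V ≃ₗ[ℝ] V)) : V →ₗ[ℝ] V) = LinearMap.id := rfl
    rw [this, LinearMap.det_id]
  · rw [det_coe_mul]
    rcases hx with hx | hx <;> rcases hy with hy | hy <;> rw [hx, hy] <;> norm_num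
  · have h : LinearMap.det (((x⁻¹ * x : V ≃ₗ[ℝ] V)) : V →ₗ[ℝ] V) = 1 := by
      rw [inv_mul_cancel]
      have : (((1 : V ≃ₗ[ℝ] V)) : V →ₗ[ℝ] V) = LinearMap.id := rfl
      rw [this, LinearMap.det_id]
    rw [det_coe_mul] at h
    rcases hx with hx | hx
    · left
      rw [hx, mul_one] at h; exact h
    · right
      rw [hx] at h
      have := h
      nlinarith [h]

lemma sgn_mul (w σ : ↥(WeylGroup Φ)) :
    sgn Φ K (w * σ) = sgn Φ K w * sgn Φ K σ := by
  unfold sgn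
  have hcoe : ((w * σ : ↥(WeylGroup Φ)) : V ≃ₗ[ℝ] V) = (w : V ≃ₗ[ℝ] V) * (σ : V ≃ₗ[ℝ] V) := rfl
  rw [hcoe, det_coe_mul]
  rcases det_pm Φ (w : V ≃ₗ[ℝ] V) w.2 with hw | hw <;>
    rcases det_pm Φ (σ : V ≃ₗ[ℝ] V) σ.2 with hs | hs <;>
    rw [hw, hs] <;> norm_num

lemma act_mul {Ψ : Set V} (w σ : ↥(WeylGroup Φ)) (m : MPsi Φ K Ψ) :
    act Φ K (w * σ) m = act Φ K w (act Φ K σ m) := by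
  unfold act
  rw [← Finsupp.mapDomain_comp]
  congr 1
  funext t
  simp [mul_smul]

lemma act_smul {Ψ : Set V} (w : ↥(WeylGroup Φ)) (c : K) (m : MPsi Φ K Ψ) :
    act Φ K w (c • m) = c • act Φ K w m :=
  Finsupp.mapDomain_smul c m

lemma act_sum {Ψ : Set V} {ι : Type*} (w : ↥(WeylGroup Φ)) (s : Finset ι)
    (f : ι → MPsi Φ K Ψ) :
    act Φ K w (∑ i ∈ s, f i) = ∑ i ∈ s, act Φ K w (f i) :=
  Finsupp.mapDomain_finset_sum

lemma kappa_eq_sum (Ψ Ψ' : Set V) [Fintype ↥(WeylGroup Φ)] (m : MPsi Φ K Ψ) :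
    kappa Φ K Ψ Ψ' m = ∑ σ : ↥(WeylSub Φ Ψ'), sgn Φ K ↑σ • act Φ K ↑σ m := by
  unfold kappa
  rw [← Set.coe_toFinset ((WeylSub Φ Ψ' : Set ↥(WeylGroup Φ))), finsum_mem_coe_finset]
  exact Finset.sum_subtype _ (fun x => Set.mem_toFinset) _

set_option maxHeartbeats 2000000 in
theorem statement14 (Ψ Ψ₁' Ψ₂' J J₁' J₂' Φp : Set V) [Finite ↥(WeylGroup Φ)]
    (hPhi : IsRootSystem Φ) (hPsi : IsSubsystem Φ Ψ)
    (hPsi1 : IsSubsystem Φ Ψ₁') (hPsi2 : IsSubsystem Φ Ψ₂')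
    (hsub : Ψ₁' ⊆ Ψ₂') (hdisj : Ψ₂' ⊆ Φ \ Ψ) (hpos : IsPositiveSystem Φ Φp)
    (hJ : IsSimpleSystem Ψ J) (hJ1 : IsSimpleSystem Ψ₁' J₁') (hJ2 : IsSimpleSystem Ψ₂' J₂')
    (hJp : J ⊆ Φp)
    (h1 : UsefulSubSystem Φ Ψ Ψ₁') (h2 : UsefulSubSystem Φ Ψ Ψ₂') :
    SpechtSub Φ K Ψ Ψ₂' ≤ SpechtSub Φ K Ψ Ψ₁' := by
  have : Fintype ↥(WeylGroup Φ) := Fintype.ofFinite _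
  set H₁ := WeylSub Φ Ψ₁' with hH₁
  set H₂ := WeylSub Φ Ψ₂' with hH₂
  have hle : H₁ ≤ H₂ := Subgroup.closure_mono (by
    rintro w ⟨α, hα, h⟩; exact ⟨α, hsub hα, h⟩)
  set K' : Subgroup ↥H₂ := H₁.subgroupOf H₂ with hK'
  set m : MPsi Φ K Ψ := Finsupp.single (QuotientGroup.mk 1) 1 with hm
  have key : polytabloid Φ K Ψ Ψ₂' =
      ∑ q : ↥H₂ ⧸ K',
        sgn Φ K (↑q.out : ↥(WeylGroup Φ)) •
          act Φ K (↑q.out : ↥(WeylGroup Φ)) (polytabloid Φ K Ψ Ψ₁') := by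
    unfold polytabloid
    rw [kappa_eq_sum, kappa_eq_sum, ← hm]
    rw [← (cosetProdEquiv K').sum_comp
      (fun σ : ↥H₂ => sgn Φ K (↑σ : ↥(WeylGroup Φ)) • act Φ K (↑σ : ↥(WeylGroup Φ)) m)]
    rw [Fintype.sum_prod_type]
    refine Finset.sum_congr rfl fun q _ => ?_
    have hcoset : ∀ τ : ↥K',
        sgn Φ K (↑(cosetProdEquiv K' (q, τ)) : ↥(WeylGroup Φ)) •
          act Φ K (↑(cosetProdEquiv K' (q, τ)) : ↥(WeylGroup Φ)) m
        = sgn Φ K (↑q.out : ↥(WeylGroup Φ)) •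
            act Φ K (↑q.out : ↥(WeylGroup Φ))
              (sgn Φ K (↑(↑τ : ↥H₂) : ↥(WeylGroup Φ)) •
                act Φ K (↑(↑τ : ↥H₂) : ↥(WeylGroup Φ)) m) := by
      intro τ
      have hc : (↑(cosetProdEquiv K' (q, τ)) : ↥(WeylGroup Φ))
          = (↑q.out : ↥(WeylGroup Φ)) * (↑(↑τ : ↥H₂) : ↥(WeylGroup Φ)) := rfl
      rw [hc, sgn_mul, act_mul, mul_smul, act_smul]
    rw [Finset.sum_congr rfl fun τ _ => hcoset τ]
    rw [← Finset.smul_sum, ← act_sum]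
    congr 2
    exact ((Subgroup.subgroupOfEquivOfLe hle).toEquiv.sum_comp
      (fun σ : ↥H₁ => sgn Φ K (↑σ : ↥(WeylGroup Φ)) •
        act Φ K (↑σ : ↥(WeylGroup Φ)) m))
  rw [SpechtSub, Submodule.span_le]
  rintro x ⟨w, rfl⟩
  show act Φ K w (polytabloid Φ K Ψ Ψ₂') ∈ SpechtSub Φ K Ψ Ψ₁'
  rw [key]
  rw [act_sum]
  refine Submodule.sum_mem _ fun q _ => ?_
  rw [act_smul, ← act_mul]
  have hx : act Φ K (w * ↑q.out) (polytabloid Φ K Ψ Ψ₁') ∈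
      Set.range (fun u : ↥(WeylGroup Φ) => act Φ K u (polytabloid Φ K Ψ Ψ₁')) :=
    Set.mem_range_self _
  exact Submodule.smul_mem _ _ (Submodule.subset_span hx)

end
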